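/- Suppose a triangle packing P of \overline{K_Z} ∨ G (where G is cubic of order n and |Z| = 3, Z disjoint from V(G)) covers every edge incident with a vertex of Z. Then defining γ(xy) = z for each edge xy of G, where z is the unique element of Z with {x,y,z} ∈ P, gives a well-defined proper 3-edge colouring of G. -/

import Mathlib

/-- A triangle of a simple graph, represented as a 3-element vertex set. -/
def IsTriangleOf {V : Type*} (G : SimpleGraph V) (T : Finset V) : Prop :=
  T.card = 3 ∧ ∀ x ∈ T, ∀ y ∈ T, x ≠ y → G.Adj x y

/-- A K₃-decomposition: every edge lies in exactly one triangle of the family. -/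
def IsTriangleDecomposition {V : Type*} (G : SimpleGraph V) (D : Set (Finset V)) : Prop :=
  (∀ T ∈ D, IsTriangleOf G T) ∧
  ∀ x y : V, G.Adj x y → ∃! T, T ∈ D ∧ x ∈ T ∧ y ∈ T

/-- A K₃-packing: pairwise edge-disjoint triangles. -/
def IsTrianglePacking {V : Type*} (G : SimpleGraph V) (D : Set (Finset V)) : Prop :=
  (∀ T ∈ D, IsTriangleOf G T) ∧
  ∀ x y : V, x ≠ y → ∀ T₁ ∈ D, ∀ T₂ ∈ D,
    x ∈ T₁ → y ∈ T₁ → x ∈ T₂ → y ∈ T₂ → T₁ = T₂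

/-- A proper edge colouring: distinct incident edges receive distinct colours. -/
def IsProperEdgeColoring {V β : Type*} (G : SimpleGraph V) (c : Sym2 V → β) : Prop :=
  ∀ e₁ ∈ G.edgeSet, ∀ e₂ ∈ G.edgeSet, e₁ ≠ e₂ → (∃ v, v ∈ e₁ ∧ v ∈ e₂) → c e₁ ≠ c e₂

/-- The join `\overline{K_Z} ∨ G`, where `Z = Fin 3` is a 3-element vertex set
disjoint from `V(G)`: edges of `G`, all edges between `Z` and `V(G)`, none inside `Z`. -/
def barJoin {V : Type*} (G : SimpleGraph V) : SimpleGraph (Fin 3 ⊕ V) where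
  Adj x y := match x, y with
    | Sum.inl _, Sum.inl _ => False
    | Sum.inl _, Sum.inr _ => True
    | Sum.inr _, Sum.inl _ => True
    | Sum.inr a, Sum.inr b => G.Adj a b
  symm := by
    constructor
    intro x y h
    cases x <;> cases y <;> simp_all
    exact h.symm
  loopless := by
    constructor
    intro x
    cases x <;> simp_all

/-- `G` is cubic: every vertex has degree 3. -/
def IsCubic {V : Type*} (G : SimpleGraph V) : Prop :=
  ∀ v : V, (G.neighborSet v).ncard = 3

/-- If a triangle packing `P` of `\overline{K_Z} ∨ G` (with `G` cubic and
`Z = Fin 3`) covers every edge incident with a vertex of `Z`, then setting `γ(xy)` to be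
the unique `z ∈ Z` with `{x, y, z} ∈ P` yields a well-defined proper 3-edge colouring
of `G`. -/
theorem stmt3 {V : Type*} [DecidableEq V] (G : SimpleGraph V) (hcubic : IsCubic G)
    (P : Set (Finset (Fin 3 ⊕ V))) (hP : IsTrianglePacking (barJoin G) P)
    (hcover : ∀ (z : Fin 3) (x : Fin 3 ⊕ V), (barJoin G).Adj (Sum.inl z) x →
      ∃ T ∈ P, Sum.inl z ∈ T ∧ x ∈ T) :
    ∃ γ : Sym2 V → Fin 3, IsProperEdgeColoring G γ ∧
      ∀ x y : V, G.Adj x y →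
        ({Sum.inr x, Sum.inr y, Sum.inl (γ s(x, y))} : Finset (Fin 3 ⊕ V)) ∈ P := by
  classical
  -- structure of any triangle of P containing `inl z` and `inr x`
  have tri_struct : ∀ (z : Fin 3) (x : V) (T : Finset (Fin 3 ⊕ V)), T ∈ P →
      Sum.inl z ∈ T → Sum.inr x ∈ T →
      ∃ w : V, G.Adj x w ∧ T = {Sum.inl z, Sum.inr x, Sum.inr w} := by
    intro z x T hT hz hx
    obtain ⟨hcard, hadj⟩ := hP.1 T hT
    have hne : (Sum.inl z : Fin 3 ⊕ V) ≠ Sum.inr x := by simp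
    have hsub : ({Sum.inl z, Sum.inr x} : Finset (Fin 3 ⊕ V)) ⊆ T := by
      intro t ht; simp at ht; rcases ht with h | h <;> subst h <;> assumption
    have h2 : ({Sum.inl z, Sum.inr x} : Finset (Fin 3 ⊕ V)).card = 2 := by
      rw [Finset.card_insert_of_notMem (by simp), Finset.card_singleton]
    have h1 : (T \ {Sum.inl z, Sum.inr x}).card = 1 := by
      rw [Finset.card_sdiff_of_subset hsub, hcard, h2]
    obtain ⟨w, hw⟩ := Finset.card_eq_one.mp h1
    have hwT : w ∈ T := (Finset.mem_sdiff.mp (hw ▸ Finset.mem_singleton_self w)).1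
    have hwmem : w ∈ T \ ({Sum.inl z, Sum.inr x} : Finset (Fin 3 ⊕ V)) :=
      hw ▸ Finset.mem_singleton_self w
    have hwne := (Finset.mem_sdiff.mp hwmem).2
    simp at hwne
    obtain ⟨hwz, hwx⟩ := hwne
    have hadjzw : (barJoin G).Adj (Sum.inl z) w := hadj _ hz _ hwT (Ne.symm hwz)
    obtain w' | w' := w
    · exact absurd hadjzw (by simp [barJoin])
    have hadj2 : (barJoin G).Adj (Sum.inr x) (Sum.inr w') :=
      hadj _ hx _ hwT (fun h => hwx h.symm)
    refine ⟨w', hadj2, ?_⟩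
    have hTeq : T = {Sum.inl z, Sum.inr x} ∪ (T \ {Sum.inl z, Sum.inr x}) := by
      rw [Finset.union_sdiff_of_subset hsub]
    rw [hTeq, hw]
    ext t; simp [or_assoc]
  -- existence of packed triangle over each edge of G
  have exists_z : ∀ x y : V, G.Adj x y →
      ∃ z : Fin 3, ({Sum.inr x, Sum.inr y, Sum.inl z} : Finset (Fin 3 ⊕ V)) ∈ P := by
    intro x y hxy
    have key : ∀ z : Fin 3, ∃ w : V, G.Adj x w ∧
        ({Sum.inl z, Sum.inr x, Sum.inr w} : Finset (Fin 3 ⊕ V)) ∈ P := by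
      intro z
      obtain ⟨T, hT, hz, hx⟩ := hcover z (Sum.inr x) (by trivial)
      obtain ⟨w, hadj, hTeq⟩ := tri_struct z x T hT hz hx
      exact ⟨w, hadj, hTeq ▸ hT⟩
    choose f hfadj hfP using key
    have hinj : Function.Injective f := by
      intro z1 z2 heq
      have hne : (Sum.inl z1 : Fin 3 ⊕ V) ≠ Sum.inr x := by simp
      have h12 := hP.2 (Sum.inr x) (Sum.inr (f z1)) (by simp [(hfadj z1).ne])
        _ (hfP z1) _ (heq ▸ hfP z2) (by simp) (by simp) (by simp) (by simp [heq])
      have : (Sum.inl z1 : Fin 3 ⊕ V) ∈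
          ({Sum.inl z2, Sum.inr x, Sum.inr (f z2)} : Finset (Fin 3 ⊕ V)) := by
        rw [← heq, ← h12]; simp
      simp at this
      exact this
    have hsub : Set.range f ⊆ G.neighborSet x := by
      rintro _ ⟨z, rfl⟩; exact hfadj z
    have hcardr : (Set.range f).ncard = 3 := by
      rw [← Set.image_univ, Set.ncard_image_of_injective _ hinj, Set.ncard_univ]
      simp
    have hfin : (G.neighborSet x).Finite :=
      Set.finite_of_ncard_ne_zero (by rw [hcubic x]; norm_num)
    have heq : Set.range f = G.neighborSet x :=
      Set.eq_of_subset_of_ncard_le hsub (by rw [hcardr, hcubic x]) hfin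
    have hy : y ∈ Set.range f := heq ▸ (hxy : y ∈ G.neighborSet x)
    obtain ⟨z, hz⟩ := hy
    refine ⟨z, ?_⟩
    have hm := hz ▸ hfP z
    have hset : ({Sum.inr x, Sum.inr y, Sum.inl z} : Finset (Fin 3 ⊕ V)) =
        {Sum.inl z, Sum.inr x, Sum.inr y} := by
      ext t; simp; tauto
    rw [hset]; exact hm
  -- the (symmetric-in-x-y) predicate and the colouring
  set Q : Sym2 V → Fin 3 → Prop := fun e z =>
    Sym2.lift ⟨fun x y => ({Sum.inr x, Sum.inr y, Sum.inl z} : Finset (Fin 3 ⊕ V)) ∈ P,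
      by intro a b; simp only [Finset.insert_comm]⟩ e with hQ
  set γ : Sym2 V → Fin 3 := fun e => if h : ∃ z, Q e z then h.choose else 0 with hγ
  have hmem : ∀ x y : V, G.Adj x y →
      ({Sum.inr x, Sum.inr y, Sum.inl (γ s(x, y))} : Finset (Fin 3 ⊕ V)) ∈ P := by
    intro x y hxy
    have hex : ∃ z, Q s(x, y) z := exists_z x y hxy
    have := hex.choose_spec
    simp only [hγ, dif_pos hex]
    exact this
  refine ⟨γ, ?_, hmem⟩
  intro e₁ he₁ e₂ he₂ hne ⟨v, hv1, hv2⟩ hcol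
  obtain ⟨w₁, rfl⟩ : ∃ w, e₁ = s(v, w) := ⟨Sym2.Mem.other hv1, (Sym2.other_spec hv1).symm⟩
  obtain ⟨w₂, rfl⟩ : ∃ w, e₂ = s(v, w) := ⟨Sym2.Mem.other hv2, (Sym2.other_spec hv2).symm⟩
  have hadj1 : G.Adj v w₁ := he₁
  have hadj2 : G.Adj v w₂ := he₂
  have hT1 := hmem v w₁ hadj1
  have hT2 := hmem v w₂ hadj2
  rw [hcol] at hT1
  have hww : w₁ ≠ w₂ := fun h => hne (by rw [h])
  have hTeq := hP.2 (Sum.inr v) (Sum.inl (γ s(v, w₂))) (by simp)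
    _ hT1 _ hT2 (by simp) (by simp) (by simp) (by simp)
  have : (Sum.inr w₁ : Fin 3 ⊕ V) ∈
      ({Sum.inr v, Sum.inr w₂, Sum.inl (γ s(v, w₂))} : Finset (Fin 3 ⊕ V)) := by
    rw [← hTeq]; simp
  simp at this
  rcases this with h | h
  · exact hadj1.ne' (by rw [h])
  · exact hww h
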